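/- Let F be the standard Gaussian CDF, let n ≥ 2, let 1 ≤ k ≤ n/2 be an integer, and let 0 < ε < 1/2. Define α⁺ and α⁻ by F(α⁺) = (1+ε)k/n and F(α⁻) = (1-ε)k/n. Then 0 ≤ α⁺ - α⁻ ≤ ε√(8π)/(1-ε). -/

import Mathlib

open MeasureTheory

/-- The standard Gaussian cumulative distribution function. -/
noncomputable def stdGaussCDF (t : ℝ) : ℝ :=
  (Real.sqrt (2 * Real.pi))⁻¹ * ∫ τ in Set.Iic t, Real.exp (-τ ^ 2 / 2)

open Real Set

noncomputable def G (x : ℝ) : ℝ := ∫ τ in Set.Iic x, Real.exp (-τ ^ 2 / 2)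

lemma gauss_int : Integrable (fun τ : ℝ => Real.exp (-τ ^ 2 / 2)) := by
  have := integrable_exp_neg_mul_sq (b := (1:ℝ)/2) (by norm_num)
  convert this using 2 with x
  ring_nf

lemma gauss_total : ∫ τ : ℝ, Real.exp (-τ ^ 2 / 2) = Real.sqrt (2 * Real.pi) := by
  have := integral_gaussian ((1:ℝ)/2)
  rw [show Real.pi / (1/2) = 2 * Real.pi by ring] at this
  rw [← this]
  congr 1 with x
  ring_nf

lemma gauss_shift (x : ℝ) :
    ∫ τ in Set.Iic x, Real.exp (-(τ - x) ^ 2 / 2) = G 0 := by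
  have m : MeasurableEmbedding (fun u : ℝ => u + x) :=
    (Homeomorph.addRight x).measurableEmbedding
  have hmap : Measure.map (fun u : ℝ => u + x) volume = volume :=
    map_add_right_eq_self volume x
  rw [G]
  nth_rewrite 1 [← hmap]
  rw [m.setIntegral_map]
  have hpre : (fun u : ℝ => u + x) ⁻¹' Set.Iic x = Set.Iic 0 := by
    ext t; simp
  rw [hpre]
  congr 1 with u
  ring_nf

lemma G_zero : G 0 = Real.sqrt (2 * Real.pi) / 2 := by
  have hsplit : G 0 + ∫ τ in Set.Ioi (0:ℝ), Real.exp (-τ ^ 2 / 2)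
      = Real.sqrt (2 * Real.pi) := by
    rw [← gauss_total, ← integral_add_compl measurableSet_Iic gauss_int]
    congr 1
    simp [Set.compl_Iic]
  have hsym : (∫ τ in Set.Ioi (0:ℝ), Real.exp (-τ ^ 2 / 2)) = G 0 := by
    have h := integral_comp_neg_Ioi (0:ℝ) (fun τ => Real.exp (-τ ^ 2 / 2))
    rw [G, show Set.Iic (0:ℝ) = Set.Iic (-0) by norm_num, ← h]
    congr 1 with τ
    ring_nf
  rw [hsym] at hsplit
  linarith

lemma G_mono {a b : ℝ} (h : a ≤ b) : G a ≤ G b := by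
  apply setIntegral_mono_set gauss_int.integrableOn
  · filter_upwards with τ using (Real.exp_pos _).le
  · exact Filter.Eventually.of_forall (Set.Iic_subset_Iic.mpr h)

lemma G_tail_le {x : ℝ} (hx : x ≤ 0) :
    G x ≤ Real.sqrt (2 * Real.pi) / 2 * Real.exp (-x ^ 2 / 2) := by
  have h1 : G x ≤ ∫ τ in Set.Iic x, Real.exp (-x ^ 2 / 2) * Real.exp (-(τ - x) ^ 2 / 2) := by
    apply setIntegral_mono_on gauss_int.integrableOn
    · exact (((gauss_int.comp_sub_right x).const_mul _)).integrableOn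
    · exact measurableSet_Iic
    · intro τ hτ
      rw [← Real.exp_add, Real.exp_le_exp]
      simp only [Set.mem_Iic] at hτ
      nlinarith [sq_nonneg (τ - x), mul_nonneg (neg_nonneg.mpr hx) (sub_nonneg.mpr hτ)]
  rw [integral_const_mul, gauss_shift, G_zero] at h1
  linarith [h1]

lemma G_upper {x : ℝ} (hx : 0 ≤ x) :
    Real.sqrt (2 * Real.pi) - G x ≤ Real.sqrt (2 * Real.pi) / 2 * Real.exp (-x ^ 2 / 2) := by
  have hsplit : G x + ∫ τ in Set.Ioi x, Real.exp (-τ ^ 2 / 2) = Real.sqrt (2 * Real.pi) := by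
    rw [← gauss_total, ← integral_add_compl measurableSet_Iic gauss_int]
    congr 1
    simp [Set.compl_Iic]
  have h := integral_comp_neg_Ioi x (fun τ => Real.exp (-τ ^ 2 / 2))
  have hsym : (∫ τ in Set.Ioi x, Real.exp (-τ ^ 2 / 2)) = G (-x) := by
    rw [G, ← h]
    congr 1 with τ
    ring_nf
  have := G_tail_le (x := -x) (by linarith)
  rw [hsym] at hsplit
  rw [show (-x) ^ 2 = x ^ 2 by ring] at this
  linarith

set_option maxHeartbeats 1000000 in
theorem stmt5 (n k : ℕ) (hn : 2 ≤ n) (hk1 : 1 ≤ k) (hkn : 2 * k ≤ n)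
    (ε : ℝ) (hε0 : 0 < ε) (hε1 : ε < 1 / 2)
    (αp αm : ℝ)
    (hαp : stdGaussCDF αp = (1 + ε) * k / n)
    (hαm : stdGaussCDF αm = (1 - ε) * k / n) :
    0 ≤ αp - αm ∧ αp - αm ≤ ε * Real.sqrt (8 * Real.pi) / (1 - ε) := by
  have hπ := Real.pi_pos
  set s := Real.sqrt (2 * Real.pi) with hs_def
  have hs : 0 < s := Real.sqrt_pos.mpr (by linarith)
  have hn0 : (0:ℝ) < n := by positivity
  have hk0 : (0:ℝ) < k := by exact_mod_cast hk1
  set K : ℝ := (k:ℝ) / n with hK_def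
  have hK0 : 0 < K := by positivity
  have hK2 : K ≤ 1 / 2 := by
    rw [hK_def, div_le_div_iff₀ hn0 (by norm_num)]
    have : (2:ℝ) * k ≤ n := by exact_mod_cast hkn
    linarith
  have hGp : G αp = s * ((1 + ε) * K) := by
    have h : s⁻¹ * G αp = (1 + ε) * k / n := hαp
    field_simp [hK_def] at h ⊢
    rw [hK_def, mul_div_assoc', eq_div_iff hn0.ne']; linarith [h]
  have hGm : G αm = s * ((1 - ε) * K) := by
    have h : s⁻¹ * G αm = (1 - ε) * k / n := hαm
    field_simp [hK_def] at h ⊢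
    rw [hK_def, mul_div_assoc', eq_div_iff hn0.ne']; linarith [h]
  -- αm ≤ 0
  have hm_neg : αm ≤ 0 := by
    by_contra h
    have h1 : G 0 ≤ G αm := G_mono (by linarith)
    rw [G_zero, hGm, ← hs_def] at h1
    nlinarith [mul_pos hs (mul_pos hε0 hK0),
      mul_nonneg hs.le (show (0:ℝ) ≤ 1/2 - K by linarith)]
  -- exp bound at αm
  have hem : (1 - ε) * K ≤ Real.exp (-αm ^ 2 / 2) := by
    have h1 := G_tail_le hm_neg
    rw [hGm, ← hs_def,
      show s * ((1 - ε) * K) = s / 2 * (2 * ((1 - ε) * K)) by ring] at h1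
    have h2 := le_of_mul_le_mul_left h1 (show (0:ℝ) < s / 2 by linarith)
    nlinarith [hK0]
  -- exp bound at αp
  have hep : (1 - ε) * K ≤ Real.exp (-αp ^ 2 / 2) := by
    rcases le_or_gt αp 0 with h | h
    · have h1 := G_tail_le h
      rw [hGp, ← hs_def,
        show s * ((1 + ε) * K) = s / 2 * (2 * ((1 + ε) * K)) by ring] at h1
      have h2 := le_of_mul_le_mul_left h1 (show (0:ℝ) < s / 2 by linarith)
      nlinarith [hK0]
    · have h1 := G_upper h.le
      rw [hGp, ← hs_def] at h1
      have h1' : s / 2 * (2 * (1 - (1 + ε) * K)) ≤ s / 2 * Real.exp (-αp ^ 2 / 2) := by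
        nlinarith [h1]
      have h2 := le_of_mul_le_mul_left h1' (show (0:ℝ) < s / 2 by linarith)
      nlinarith [hK0, hK2]
  -- ordering
  have horder : αm ≤ αp := by
    by_contra h
    have h1 : G αp ≤ G αm := G_mono (by linarith)
    rw [hGp, hGm] at h1
    have h2 := le_of_mul_le_mul_left h1 hs
    nlinarith [mul_pos hε0 hK0]
  refine ⟨by linarith, ?_⟩
  have hdiff : G αp - G αm = ∫ τ in Set.Ioc αm αp, Real.exp (-τ ^ 2 / 2) := by
    rw [G, G, intervalIntegral.integral_Iic_sub_Iic gauss_int.integrableOn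
      gauss_int.integrableOn, intervalIntegral.integral_of_le horder]
  have hlow : (1 - ε) * K * (αp - αm) ≤ ∫ τ in Set.Ioc αm αp, Real.exp (-τ ^ 2 / 2) := by
    have hvol : (volume (Set.Ioc αm αp)).toReal = αp - αm := by
      rw [Real.volume_Ioc, ENNReal.toReal_ofReal (by linarith)]
    have h := setIntegral_ge_of_const_le_real (c := (1 - ε) * K) (μ := volume) (s := Set.Ioc αm αp)
      measurableSet_Ioc (by simp) ?_ gauss_int.integrableOn
    · rw [Measure.real, hvol] at h; simpa [smul_eq_mul, mul_comm] using h
    · intro τ hτ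
      obtain ⟨h1, h2⟩ := hτ
      rcases le_or_gt τ 0 with h | h
      · refine le_trans hem (Real.exp_le_exp.mpr ?_)
        nlinarith
      · refine le_trans hep (Real.exp_le_exp.mpr ?_)
        nlinarith
  rw [← hdiff, hGp, hGm] at hlow
  have h3 : K * ((1 - ε) * (αp - αm)) ≤ K * (2 * ε * s) := by
    calc K * ((1 - ε) * (αp - αm)) = (1 - ε) * K * (αp - αm) := by ring
      _ ≤ s * ((1 + ε) * K) - s * ((1 - ε) * K) := hlow
      _ = K * (2 * ε * s) := by ring
  have h4 := le_of_mul_le_mul_left h3 hK0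
  have hs8 : Real.sqrt (8 * Real.pi) = 2 * s := by
    rw [hs_def, show (8:ℝ) * Real.pi = 2 ^ 2 * (2 * Real.pi) by ring,
      Real.sqrt_mul (by norm_num), Real.sqrt_sq (by norm_num)]
  rw [hs8, le_div_iff₀ (by linarith : (0:ℝ) < 1 - ε)]
  nlinarith [h4]
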